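/- Let D be a constant symmetric positive semidefinite n×n real matrix, a : ℝⁿ → ℝⁿ a smooth vector field, ρ ∈ ℝ, and L f(x) = Σ_{i,j=1}^n D_{ij} ∂²f/∂x_i∂x_j(x) − Σ_{i=1}^n a_i(x) ∂f/∂x_i(x). Then the curvature-dimension criterion CD(ρ,∞), namely Γ₂(f)(x) ≥ ρ Γ(f)(x) for all smooth f : ℝⁿ → ℝ and all x ∈ ℝⁿ, holds if and only if ½( Ja(x) D + (Ja(x) D)* ) ≥ ρ D for all x ∈ ℝⁿ, in the sense of quadratic forms on ℝⁿ, where Ja is the Jacobian matrix of a. -/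

import Mathlib

open Matrix

/-- Partial derivative `∂f/∂x_i` of `f : ℝⁿ → ℝ` at `x`. -/
noncomputable def pd {n : ℕ} (i : Fin n) (f : (Fin n → ℝ) → ℝ) (x : Fin n → ℝ) : ℝ :=
  fderiv ℝ f x (Pi.single i 1)

/-- The second-order differential operator
`L f(x) = Σ_{i,j} D_{ij}(x) ∂²f/∂x_i∂x_j(x) − Σ_i a_i(x) ∂f/∂x_i(x)`. -/
noncomputable def Lop {n : ℕ} (D : (Fin n → ℝ) → Matrix (Fin n) (Fin n) ℝ)
    (a : (Fin n → ℝ) → Fin n → ℝ) (f : (Fin n → ℝ) → ℝ) (x : Fin n → ℝ) : ℝ :=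
  (∑ i, ∑ j, D x i j * pd i (fun y => pd j f y) x) - ∑ i, a x i * pd i f x

/-- The carré du champ operator `Γ(f,g) = ½( L(fg) − f·Lg − g·Lf )`. -/
noncomputable def Gam {n : ℕ} (D : (Fin n → ℝ) → Matrix (Fin n) (Fin n) ℝ)
    (a : (Fin n → ℝ) → Fin n → ℝ) (f g : (Fin n → ℝ) → ℝ) (x : Fin n → ℝ) : ℝ :=
  (1 / 2) * (Lop D a (fun y => f y * g y) x - f x * Lop D a g x - g x * Lop D a f x)

/-- The `Γ₂` operator `Γ₂(f) = ½( LΓ(f) − 2Γ(f, Lf) )`, where `Γ(f) = Γ(f,f)`. -/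
noncomputable def Gam2 {n : ℕ} (D : (Fin n → ℝ) → Matrix (Fin n) (Fin n) ℝ)
    (a : (Fin n → ℝ) → Fin n → ℝ) (f : (Fin n → ℝ) → ℝ) (x : Fin n → ℝ) : ℝ :=
  (1 / 2) * (Lop D a (fun y => Gam D a f f y) x - 2 * Gam D a f (fun y => Lop D a f y) x)

/-- The Jacobian matrix `Ja(x) = ( ∂a_i/∂x_j(x) )_{ij}` of `a : ℝⁿ → ℝⁿ` at `x`. -/
noncomputable def Jac {n : ℕ} (a : (Fin n → ℝ) → Fin n → ℝ) (x : Fin n → ℝ) :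
    Matrix (Fin n) (Fin n) ℝ :=
  Matrix.of fun i j => pd j (fun y => a y i) x


section pdAPI
variable {n : ℕ} {f g : (Fin n → ℝ) → ℝ} {x : Fin n → ℝ}

lemma smooth_diffAt (hf : ContDiff ℝ (⊤ : ℕ∞) f) : DifferentiableAt ℝ f x :=
  (hf.differentiable (by simp)).differentiableAt

lemma pd_smooth (hf : ContDiff ℝ (⊤ : ℕ∞) f) (i : Fin n) : ContDiff ℝ (⊤ : ℕ∞) (pd i f) :=
  (hf.fderiv_right (m := (⊤:ℕ∞)) (by simp)).clm_apply contDiff_const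

lemma pd_add (hf : DifferentiableAt ℝ f x) (hg : DifferentiableAt ℝ g x) (i : Fin n) :
    pd i (fun y => f y + g y) x = pd i f x + pd i g x := by
  unfold pd; rw [fderiv_fun_add hf hg]; simp

lemma pd_mul (hf : DifferentiableAt ℝ f x) (hg : DifferentiableAt ℝ g x) (i : Fin n) :
    pd i (fun y => f y * g y) x = pd i f x * g x + f x * pd i g x := by
  unfold pd; rw [fderiv_fun_mul hf hg]; simp; ring

lemma pd_sub (hf : DifferentiableAt ℝ f x) (hg : DifferentiableAt ℝ g x) (i : Fin n) :
    pd i (fun y => f y - g y) x = pd i f x - pd i g x := by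
  unfold pd; rw [fderiv_fun_sub hf hg]; simp

lemma pd_const (c : ℝ) (i : Fin n) : pd i (fun _ => c) x = 0 := by
  unfold pd; rw [fderiv_fun_const]; simp

lemma pd_const_mul (hf : DifferentiableAt ℝ f x) (c : ℝ) (i : Fin n) :
    pd i (fun y => c * f y) x = c * pd i f x := by
  unfold pd; rw [fderiv_const_mul hf]; simp

lemma pd_sum {ι : Type*} (s : Finset ι) (F : ι → (Fin n → ℝ) → ℝ)
    (h : ∀ j ∈ s, DifferentiableAt ℝ (F j) x) (i : Fin n) :
    pd i (fun y => ∑ j ∈ s, F j y) x = ∑ j ∈ s, pd i (F j) x := by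
  unfold pd; rw [fderiv_fun_sum h]; simp

lemma pd_comm (hf : ContDiff ℝ (⊤ : ℕ∞) f) (i j : Fin n) (x : Fin n → ℝ) :
    pd i (pd j f) x = pd j (pd i f) x := by
  have hd : ∀ y, HasFDerivAt f (fderiv ℝ f y) y := fun y =>
    (hf.differentiable (by simp) y).hasFDerivAt
  have h2 : DifferentiableAt ℝ (fderiv ℝ f) x :=
    ((hf.fderiv_right (m := (⊤:ℕ∞)) (by simp)).differentiable (by simp)).differentiableAt
  have hsymm := second_derivative_symmetric hd h2.hasFDerivAt
    (Pi.single i 1) (Pi.single j 1)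
  have key : ∀ (v w : Fin n → ℝ),
      fderiv ℝ (fun y => fderiv ℝ f y v) x w = fderiv ℝ (fderiv ℝ f) x w v := by
    intro v w
    have := fderiv_clm_apply h2 (differentiableAt_const v)
    rw [this]; simp
  show fderiv ℝ (fun y => fderiv ℝ f y (Pi.single j 1)) x (Pi.single i 1) =
    fderiv ℝ (fun y => fderiv ℝ f y (Pi.single i 1)) x (Pi.single j 1)
  rw [key, key]
  exact hsymm

end pdAPI

section sums
variable {n : ℕ}

lemma sum_swap23 (f : Fin n → Fin n → Fin n → ℝ) :
    ∑ a, ∑ b, ∑ c, f a b c = ∑ a, ∑ c, ∑ b, f a b c :=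
  Finset.sum_congr rfl fun _ _ => Finset.sum_comm

lemma sum_swap34 (f : Fin n → Fin n → Fin n → Fin n → ℝ) :
    ∑ a, ∑ b, ∑ c, ∑ d, f a b c d = ∑ a, ∑ b, ∑ d, ∑ c, f a b c d :=
  Finset.sum_congr rfl fun _ _ => Finset.sum_congr rfl fun _ _ => Finset.sum_comm

lemma sum3_rev (f : Fin n → Fin n → Fin n → ℝ) :
    ∑ a, ∑ b, ∑ c, f a b c = ∑ a, ∑ b, ∑ c, f c b a :=
  calc ∑ a, ∑ b, ∑ c, f a b c
      = ∑ a, ∑ c, ∑ b, f a b c := sum_swap23 f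
    _ = ∑ c, ∑ a, ∑ b, f a b c := Finset.sum_comm
    _ = ∑ c, ∑ b, ∑ a, f a b c := sum_swap23 fun c a b => f a b c

lemma sum4_rev (f : Fin n → Fin n → Fin n → Fin n → ℝ) :
    ∑ a, ∑ b, ∑ c, ∑ d, f a b c d = ∑ a, ∑ b, ∑ c, ∑ d, f d c b a :=
  calc ∑ a, ∑ b, ∑ c, ∑ d, f a b c d
      = ∑ a, ∑ d, ∑ c, ∑ b, f a b c d :=
        Finset.sum_congr rfl fun a _ => sum3_rev (f a)
    _ = ∑ d, ∑ a, ∑ c, ∑ b, f a b c d := Finset.sum_comm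
    _ = ∑ d, ∑ c, ∑ a, ∑ b, f a b c d :=
        Finset.sum_congr rfl fun _ _ => Finset.sum_comm
    _ = ∑ d, ∑ c, ∑ b, ∑ a, f a b c d :=
        Finset.sum_congr rfl fun _ _ => Finset.sum_congr rfl fun _ _ => Finset.sum_comm

lemma sum_p_in3 (f : Fin n → Fin n → Fin n → ℝ) :
    ∑ p, ∑ k, ∑ l, f p k l = ∑ k, ∑ l, ∑ p, f p k l :=
  calc ∑ p, ∑ k, ∑ l, f p k l
      = ∑ k, ∑ p, ∑ l, f p k l := Finset.sum_comm
    _ = ∑ k, ∑ l, ∑ p, f p k l := Finset.sum_congr rfl fun _ _ => Finset.sum_comm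

open scoped MatrixOrder in
lemma Q_nonneg (D : Matrix (Fin n) (Fin n) ℝ) (hD : D.PosSemidef) (H : Fin n → Fin n → ℝ) :
    0 ≤ ∑ k, ∑ l, ∑ i, ∑ j, D k l * D i j * (H k i * H l j) := by
  set R := CFC.sqrt D with hR
  have hRR : R * R = D := CFC.sqrt_mul_sqrt_self D hD.nonneg
  have hRs : ∀ i j, R i j = R j i := fun i j => by
    have := (CFC.sqrt_nonneg D).posSemidef.isHermitian.apply i j
    simpa using this.symm
  have hDij : ∀ i j, D i j = ∑ p, R p i * R p j := by
    intro i j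
    rw [← hRR, Matrix.mul_apply]
    exact Finset.sum_congr rfl fun p _ => by rw [hRs i p]
  set c : Fin n → Fin n → ℝ := fun k p => ∑ i, R p i * H k i with hc
  have key : ∀ k l, ∑ i, ∑ j, D i j * (H k i * H l j) = ∑ p, c k p * c l p := by
    intro k l
    have h1 : ∀ p, c k p * c l p = ∑ i, ∑ j, (R p i * H k i) * (R p j * H l j) := fun p =>
      Finset.sum_mul_sum _ _ _ _
    rw [Finset.sum_congr rfl fun p _ => h1 p, sum_p_in3]
    refine Finset.sum_congr rfl fun i _ => Finset.sum_congr rfl fun j _ => ?_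
    rw [hDij i j, Finset.sum_mul]
    exact Finset.sum_congr rfl fun p _ => by ring
  have hQ : ∑ k, ∑ l, ∑ i, ∑ j, D k l * D i j * (H k i * H l j)
      = ∑ p, ∑ k, ∑ l, D k l * (c k p * c l p) :=
    calc ∑ k, ∑ l, ∑ i, ∑ j, D k l * D i j * (H k i * H l j)
        = ∑ k, ∑ l, D k l * ∑ i, ∑ j, D i j * (H k i * H l j) := by
          refine Finset.sum_congr rfl fun k _ => Finset.sum_congr rfl fun l _ => ?_
          rw [Finset.mul_sum]
          refine Finset.sum_congr rfl fun i _ => ?_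
          rw [Finset.mul_sum]
          exact Finset.sum_congr rfl fun j _ => by ring
      _ = ∑ k, ∑ l, ∑ p, D k l * (c k p * c l p) := by
          refine Finset.sum_congr rfl fun k _ => Finset.sum_congr rfl fun l _ => ?_
          rw [key k l, Finset.mul_sum]
      _ = ∑ p, ∑ k, ∑ l, D k l * (c k p * c l p) :=
          (sum_p_in3 fun p k l => D k l * (c k p * c l p)).symm
  rw [hQ]
  refine Finset.sum_nonneg fun p _ => ?_
  have h0 : 0 ≤ ∑ k, ∑ l, c k p * (D k l * c l p) := by
    simpa [dotProduct, Matrix.mulVec, Finset.mul_sum] using hD.dotProduct_mulVec_nonneg (fun k => c k p)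
  refine le_of_le_of_eq h0 ?_
  exact Finset.sum_congr rfl fun k _ => Finset.sum_congr rfl fun l _ => by ring

end sums

lemma gam_eq {n : ℕ} (D : Matrix (Fin n) (Fin n) ℝ) (hDs : ∀ i j, D i j = D j i)
    (a : (Fin n → ℝ) → Fin n → ℝ) {f g : (Fin n → ℝ) → ℝ}
    (hf : ContDiff ℝ (⊤ : ℕ∞) f) (hg : ContDiff ℝ (⊤ : ℕ∞) g) (x : Fin n → ℝ) :
    Gam (fun _ => D) a f g x = ∑ i, ∑ j, D i j * (pd i f x * pd j g x) := by
  have df : ∀ y, DifferentiableAt ℝ f y := fun y => smooth_diffAt hf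
  have dg : ∀ y, DifferentiableAt ℝ g y := fun y => smooth_diffAt hg
  have dpf : ∀ (j : Fin n) (y : Fin n → ℝ), DifferentiableAt ℝ (pd j f) y :=
    fun j y => smooth_diffAt (pd_smooth hf j)
  have dpg : ∀ (j : Fin n) (y : Fin n → ℝ), DifferentiableAt ℝ (pd j g) y :=
    fun j y => smooth_diffAt (pd_smooth hg j)
  have hmul : ∀ j : Fin n, pd j (fun y => f y * g y) =
      fun y => pd j f y * g y + f y * pd j g y :=
    fun j => funext fun y => pd_mul (df y) (dg y) j
  have hT1 : ∀ i j : Fin n, pd i (pd j fun y => f y * g y) x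
      = pd i (pd j f) x * g x + pd j f x * pd i g x
        + (pd i f x * pd j g x + f x * pd i (pd j g) x) := by
    intro i j
    rw [hmul j, pd_add ((dpf j x).fun_mul (dg x)) ((df x).fun_mul (dpg j x)) i,
        pd_mul (dpf j x) (dg x) i, pd_mul (df x) (dpg j x) i]
  unfold Gam Lop
  show (1/2 : ℝ) * ((∑ i, ∑ j, D i j * pd i (pd j fun y => f y * g y) x)
      - (∑ i, a x i * pd i (fun y => f y * g y) x)
      - f x * ((∑ i, ∑ j, D i j * pd i (pd j g) x) - ∑ i, a x i * pd i g x)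
      - g x * ((∑ i, ∑ j, D i j * pd i (pd j f) x) - ∑ i, a x i * pd i f x))
    = ∑ i, ∑ j, D i j * (pd i f x * pd j g x)
  have e1 : ∑ i, ∑ j, D i j * pd i (pd j fun y => f y * g y) x
      = (∑ i, ∑ j, D i j * pd i (pd j f) x) * g x
        + ((∑ i, ∑ j, D i j * (pd j f x * pd i g x))
        + ((∑ i, ∑ j, D i j * (pd i f x * pd j g x))
        + f x * (∑ i, ∑ j, D i j * pd i (pd j g) x))) := by
    simp only [Finset.sum_mul, Finset.mul_sum, ← Finset.sum_add_distrib]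
    exact Finset.sum_congr rfl fun i _ => Finset.sum_congr rfl fun j _ => by
      rw [hT1 i j]; ring
  have e2 : ∑ i, a x i * pd i (fun y => f y * g y) x
      = (∑ i, a x i * pd i f x) * g x + f x * ∑ i, a x i * pd i g x := by
    simp only [Finset.sum_mul, Finset.mul_sum, ← Finset.sum_add_distrib]
    exact Finset.sum_congr rfl fun i _ => by
      rw [pd_mul (df x) (dg x) i]; ring
  have hswap : ∑ i, ∑ j, D i j * (pd j f x * pd i g x)
      = ∑ i, ∑ j, D i j * (pd i f x * pd j g x) := by
    rw [Finset.sum_comm]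
    exact Finset.sum_congr rfl fun i _ => Finset.sum_congr rfl fun j _ => by
      rw [hDs j i]
  rw [e1, e2, hswap]
  ring

lemma lop_smooth {n : ℕ} (D : Matrix (Fin n) (Fin n) ℝ)
    (a : (Fin n → ℝ) → Fin n → ℝ) (ha : ∀ i, ContDiff ℝ (⊤ : ℕ∞) fun x => a x i)
    {f : (Fin n → ℝ) → ℝ} (hf : ContDiff ℝ (⊤ : ℕ∞) f) :
    ContDiff ℝ (⊤ : ℕ∞) (Lop (fun _ => D) a f) := by
  show ContDiff ℝ (⊤ : ℕ∞) fun x =>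
    (∑ i, ∑ j, D i j * pd i (pd j f) x) - ∑ i, a x i * pd i f x
  apply ContDiff.sub
  · apply ContDiff.sum; intro i _
    apply ContDiff.sum; intro j _
    exact contDiff_const.mul (pd_smooth (pd_smooth hf j) i)
  · apply ContDiff.sum; intro i _
    exact (ha i).mul (pd_smooth hf i)

lemma gam2_eq {n : ℕ} (D : Matrix (Fin n) (Fin n) ℝ) (hDs : ∀ i j, D i j = D j i)
    (a : (Fin n → ℝ) → Fin n → ℝ) (ha : ∀ i, ContDiff ℝ (⊤ : ℕ∞) fun x => a x i)
    {f : (Fin n → ℝ) → ℝ} (hf : ContDiff ℝ (⊤ : ℕ∞) f) (x : Fin n → ℝ) :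
    Gam2 (fun _ => D) a f x
      = (∑ k, ∑ l, ∑ i, ∑ j, D k l * D i j * (pd k (pd i f) x * pd l (pd j f) x))
        + ∑ k, ∑ l, ∑ i, D k l * pd k f x * (pd l (fun y => a y i) x * pd i f x) := by
  have dpf : ∀ (j : Fin n) (y : Fin n → ℝ), DifferentiableAt ℝ (pd j f) y :=
    fun j y => smooth_diffAt (pd_smooth hf j)
  have hpf : ∀ j : Fin n, ContDiff ℝ (⊤ : ℕ∞) (pd j f) := fun j => pd_smooth hf j
  have dppf : ∀ (i j : Fin n) (y : Fin n → ℝ), DifferentiableAt ℝ (pd i (pd j f)) y :=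
    fun i j y => smooth_diffAt (pd_smooth (hpf j) i)
  have da : ∀ (i : Fin n) (y : Fin n → ℝ), DifferentiableAt ℝ (fun z => a z i) y :=
    fun i y => smooth_diffAt (ha i)
  set G : (Fin n → ℝ) → ℝ := fun y => ∑ i, ∑ j, D i j * (pd i f y * pd j f y) with hGdef
  have hGam : Gam (fun _ => D) a f f = G := funext fun y => gam_eq D hDs a hf hf y
  have dinner : ∀ (i : Fin n) (y : Fin n → ℝ),
      DifferentiableAt ℝ (fun z => ∑ j, D i j * (pd i f z * pd j f z)) y :=
    fun i y => DifferentiableAt.fun_sum fun j _ =>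
      (differentiableAt_const _).fun_mul ((dpf i y).fun_mul (dpf j y))
  have hpdG : ∀ l : Fin n, pd l G
      = fun y => ∑ i, ∑ j, D i j *
          (pd l (pd i f) y * pd j f y + pd i f y * pd l (pd j f) y) := by
    intro l
    funext y
    rw [hGdef]
    calc pd l (fun z => ∑ i, ∑ j, D i j * (pd i f z * pd j f z)) y
        = ∑ i, pd l (fun z => ∑ j, D i j * (pd i f z * pd j f z)) y :=
          pd_sum Finset.univ _ (fun i _ => dinner i y) l
      _ = _ := by
          refine Finset.sum_congr rfl fun i _ => ?_
          calc pd l (fun z => ∑ j, D i j * (pd i f z * pd j f z)) y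
              = ∑ j, pd l (fun z => D i j * (pd i f z * pd j f z)) y :=
                pd_sum Finset.univ _
                  (fun j _ => (differentiableAt_const _).fun_mul ((dpf i y).fun_mul (dpf j y))) l
            _ = _ := by
                refine Finset.sum_congr rfl fun j _ => ?_
                exact (pd_const_mul ((dpf i y).fun_mul (dpf j y)) (D i j) l).trans
                  (by rw [pd_mul (dpf i y) (dpf j y) l])
  have hpdpdG : ∀ k l : Fin n, pd k (pd l G) x
      = ∑ i, ∑ j, D i j *
          (pd k (pd l (pd i f)) x * pd j f x + pd l (pd i f) x * pd k (pd j f) x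
            + (pd k (pd i f) x * pd l (pd j f) x + pd i f x * pd k (pd l (pd j f)) x)) := by
    intro k l
    rw [hpdG l]
    have dmul : ∀ (i j : Fin n) (y : Fin n → ℝ), DifferentiableAt ℝ
        (fun z => pd l (pd i f) z * pd j f z + pd i f z * pd l (pd j f) z) y :=
      fun i j y => ((dppf l i y).fun_mul (dpf j y)).add ((dpf i y).fun_mul (dppf l j y))
    have dinner2 : ∀ (i : Fin n) (y : Fin n → ℝ), DifferentiableAt ℝ
        (fun z => ∑ j, D i j *
          (pd l (pd i f) z * pd j f z + pd i f z * pd l (pd j f) z)) y :=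
      fun i y => DifferentiableAt.fun_sum fun j _ =>
        (differentiableAt_const _).fun_mul (dmul i j y)
    calc pd k (fun z => ∑ i, ∑ j, D i j *
            (pd l (pd i f) z * pd j f z + pd i f z * pd l (pd j f) z)) x
        = ∑ i, pd k (fun z => ∑ j, D i j *
            (pd l (pd i f) z * pd j f z + pd i f z * pd l (pd j f) z)) x :=
          pd_sum Finset.univ _ (fun i _ => dinner2 i x) k
      _ = _ := by
          refine Finset.sum_congr rfl fun i _ => ?_
          calc pd k (fun z => ∑ j, D i j *
                (pd l (pd i f) z * pd j f z + pd i f z * pd l (pd j f) z)) x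
              = ∑ j, pd k (fun z => D i j *
                (pd l (pd i f) z * pd j f z + pd i f z * pd l (pd j f) z)) x :=
                pd_sum Finset.univ _
                  (fun j _ => (differentiableAt_const _).fun_mul (dmul i j x)) k
            _ = _ := by
                refine Finset.sum_congr rfl fun j _ => ?_
                refine (pd_const_mul (dmul i j x) (D i j) k).trans ?_
                rw [pd_add ((dppf l i x).fun_mul (dpf j x)) ((dpf i x).fun_mul (dppf l j x)) k,
                  pd_mul (dppf l i x) (dpf j x) k, pd_mul (dpf i x) (dppf l j x) k]
  have hLG : Lop (fun _ => D) a G x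
      = (∑ k, ∑ l, D k l * pd k (pd l G) x) - ∑ k, a x k * pd k G x := rfl
  have E1 : ∑ k, ∑ l, D k l * pd k (pd l G) x
      = (∑ k, ∑ l, ∑ i, ∑ j, D k l * D i j * (pd k (pd l (pd i f)) x * pd j f x))
        + ((∑ k, ∑ l, ∑ i, ∑ j, D k l * D i j * (pd l (pd i f) x * pd k (pd j f) x))
        + ((∑ k, ∑ l, ∑ i, ∑ j, D k l * D i j * (pd k (pd i f) x * pd l (pd j f) x))
        + (∑ k, ∑ l, ∑ i, ∑ j, D k l * D i j * (pd i f x * pd k (pd l (pd j f)) x)))) := by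
    calc ∑ k, ∑ l, D k l * pd k (pd l G) x
        = ∑ k, ∑ l, ∑ i, ∑ j,
            (D k l * D i j * (pd k (pd l (pd i f)) x * pd j f x)
             + (D k l * D i j * (pd l (pd i f) x * pd k (pd j f) x)
             + (D k l * D i j * (pd k (pd i f) x * pd l (pd j f) x)
             + D k l * D i j * (pd i f x * pd k (pd l (pd j f)) x)))) := by
          refine Finset.sum_congr rfl fun k _ => Finset.sum_congr rfl fun l _ => ?_
          rw [hpdpdG k l, Finset.mul_sum]
          refine Finset.sum_congr rfl fun i _ => ?_
          rw [Finset.mul_sum]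
          exact Finset.sum_congr rfl fun j _ => by ring
      _ = _ := by simp only [Finset.sum_add_distrib]
  have hpdGx : ∀ k : Fin n, pd k G x
      = ∑ i, ∑ j, D i j * (pd k (pd i f) x * pd j f x + pd i f x * pd k (pd j f) x) :=
    fun k => congrFun (hpdG k) x
  have E2 : ∑ k, a x k * pd k G x
      = (∑ k, ∑ i, ∑ j, a x k * (D i j * (pd k (pd i f) x * pd j f x)))
        + ∑ k, ∑ i, ∑ j, a x k * (D i j * (pd i f x * pd k (pd j f) x)) := by
    calc ∑ k, a x k * pd k G x
        = ∑ k, ∑ i, ∑ j, (a x k * (D i j * (pd k (pd i f) x * pd j f x))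
            + a x k * (D i j * (pd i f x * pd k (pd j f) x))) := by
          refine Finset.sum_congr rfl fun k _ => ?_
          rw [hpdGx k, Finset.mul_sum]
          refine Finset.sum_congr rfl fun i _ => ?_
          rw [Finset.mul_sum]
          exact Finset.sum_congr rfl fun j _ => by ring
      _ = _ := by simp only [Finset.sum_add_distrib]
  have hpdLf : ∀ l : Fin n, pd l (Lop (fun _ => D) a f) x
      = (∑ i, ∑ j, D i j * pd l (pd i (pd j f)) x)
        - ∑ i, (pd l (fun y => a y i) x * pd i f x + a x i * pd l (pd i f) x) := by
    intro l
    have d1 : ∀ y, DifferentiableAt ℝ (fun z => ∑ i, ∑ j, D i j * pd i (pd j f) z) y :=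
      fun y => DifferentiableAt.fun_sum fun i _ => DifferentiableAt.fun_sum fun j _ =>
        (differentiableAt_const _).fun_mul (dppf i j y)
    have d2 : ∀ y, DifferentiableAt ℝ (fun z => ∑ i, a z i * pd i f z) y :=
      fun y => DifferentiableAt.fun_sum fun i _ => (da i y).fun_mul (dpf i y)
    calc pd l (Lop (fun _ => D) a f) x
        = pd l (fun z => (∑ i, ∑ j, D i j * pd i (pd j f) z) - ∑ i, a z i * pd i f z) x := rfl
      _ = pd l (fun z => ∑ i, ∑ j, D i j * pd i (pd j f) z) x
            - pd l (fun z => ∑ i, a z i * pd i f z) x := pd_sub (d1 x) (d2 x) l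
      _ = _ := by
          congr 1
          · calc pd l (fun z => ∑ i, ∑ j, D i j * pd i (pd j f) z) x
                = ∑ i, pd l (fun z => ∑ j, D i j * pd i (pd j f) z) x :=
                  pd_sum Finset.univ _
                    (fun i _ => DifferentiableAt.fun_sum fun j _ =>
                      (differentiableAt_const _).fun_mul (dppf i j x)) l
              _ = _ := by
                  refine Finset.sum_congr rfl fun i _ => ?_
                  calc pd l (fun z => ∑ j, D i j * pd i (pd j f) z) x
                      = ∑ j, pd l (fun z => D i j * pd i (pd j f) z) x :=
                        pd_sum Finset.univ _
                          (fun j _ => (differentiableAt_const _).fun_mul (dppf i j x)) l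
                    _ = _ := Finset.sum_congr rfl fun j _ =>
                        pd_const_mul (dppf i j x) (D i j) l
          · calc pd l (fun z => ∑ i, a z i * pd i f z) x
                = ∑ i, pd l (fun z => a z i * pd i f z) x :=
                  pd_sum Finset.univ _ (fun i _ => (da i x).fun_mul (dpf i x)) l
              _ = _ := Finset.sum_congr rfl fun i _ => pd_mul (da i x) (dpf i x) l
  have hLfsmooth := lop_smooth D a ha hf
  have E3 : Gam (fun _ => D) a f (Lop (fun _ => D) a f) x
      = (∑ k, ∑ l, ∑ i, ∑ j, D k l * D i j * (pd k f x * pd l (pd i (pd j f)) x))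
        - ((∑ k, ∑ l, ∑ i, D k l * pd k f x * (pd l (fun y => a y i) x * pd i f x))
          + ∑ k, ∑ l, ∑ i, D k l * (pd k f x * (a x i * pd l (pd i f) x))) := by
    rw [gam_eq D hDs a hf hLfsmooth x]
    calc ∑ k, ∑ l, D k l * (pd k f x * pd l (Lop (fun _ => D) a f) x)
        = ∑ k, ∑ l, ((∑ i, ∑ j, D k l * D i j * (pd k f x * pd l (pd i (pd j f)) x))
            - ∑ i, (D k l * pd k f x * (pd l (fun y => a y i) x * pd i f x)
                    + D k l * (pd k f x * (a x i * pd l (pd i f) x)))) := by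
          refine Finset.sum_congr rfl fun k _ => Finset.sum_congr rfl fun l _ => ?_
          rw [hpdLf l, mul_sub, mul_sub]
          congr 1
          · simp only [Finset.mul_sum]
            exact Finset.sum_congr rfl fun i _ => Finset.sum_congr rfl fun j _ => by ring
          · simp only [Finset.mul_sum]
            exact Finset.sum_congr rfl fun i _ => by ring
      _ = _ := by simp only [Finset.sum_sub_distrib, Finset.sum_add_distrib]
  -- symmetry helpers
  have hHx : ∀ p q : Fin n, pd p (pd q f) x = pd q (pd p f) x := fun p q => pd_comm hf p q x
  have hmid : ∀ q r : Fin n, pd q (pd r f) = pd r (pd q f) :=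
    fun q r => funext fun y => pd_comm hf q r y
  have tso : ∀ (p q r : Fin n) (y : Fin n → ℝ),
      pd p (pd q (pd r f)) y = pd q (pd p (pd r f)) y :=
    fun p q r y => pd_comm (hpf r) p q y
  have tsi : ∀ (p q r : Fin n) (y : Fin n → ℝ),
      pd p (pd q (pd r f)) y = pd p (pd r (pd q f)) y :=
    fun p q r y => by rw [hmid q r]
  have t3 : ∀ p q r : Fin n, pd p (pd q (pd r f)) x = pd r (pd q (pd p f)) x :=
    fun p q r => by rw [tsi p q r x, tso p r q x, tsi r p q x]
  -- index gymnastics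
  have I1 : (∑ k, ∑ l, ∑ i, ∑ j, D k l * D i j * (pd l (pd i f) x * pd k (pd j f) x))
      = ∑ k, ∑ l, ∑ i, ∑ j, D k l * D i j * (pd k (pd i f) x * pd l (pd j f) x) := by
    rw [Finset.sum_comm]
    refine Finset.sum_congr rfl fun k _ => Finset.sum_congr rfl fun l _ =>
      Finset.sum_congr rfl fun i _ => Finset.sum_congr rfl fun j _ => ?_
    rw [hDs l k]
  have I2 : (∑ k, ∑ l, ∑ i, ∑ j, D k l * D i j * (pd i f x * pd k (pd l (pd j f)) x))
      = ∑ k, ∑ l, ∑ i, ∑ j, D k l * D i j * (pd k (pd l (pd i f)) x * pd j f x) := by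
    rw [sum_swap34]
    refine Finset.sum_congr rfl fun k _ => Finset.sum_congr rfl fun l _ =>
      Finset.sum_congr rfl fun i _ => Finset.sum_congr rfl fun j _ => ?_
    rw [hDs j i]; ring
  have I3 : (∑ k, ∑ l, ∑ i, ∑ j, D k l * D i j * (pd k f x * pd l (pd i (pd j f)) x))
      = ∑ k, ∑ l, ∑ i, ∑ j, D k l * D i j * (pd k (pd l (pd i f)) x * pd j f x) := by
    rw [sum4_rev]
    refine Finset.sum_congr rfl fun k _ => Finset.sum_congr rfl fun l _ =>
      Finset.sum_congr rfl fun i _ => Finset.sum_congr rfl fun j _ => ?_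
    rw [hDs j i, hDs l k, t3 i l k]; ring
  have I4 : (∑ k, ∑ i, ∑ j, a x k * (D i j * (pd i f x * pd k (pd j f) x)))
      = ∑ k, ∑ i, ∑ j, a x k * (D i j * (pd k (pd i f) x * pd j f x)) := by
    rw [sum_swap23]
    refine Finset.sum_congr rfl fun k _ => Finset.sum_congr rfl fun i _ =>
      Finset.sum_congr rfl fun j _ => ?_
    rw [hDs j i]; ring
  have I5 : (∑ k, ∑ l, ∑ i, D k l * (pd k f x * (a x i * pd l (pd i f) x)))
      = ∑ k, ∑ i, ∑ j, a x k * (D i j * (pd k (pd i f) x * pd j f x)) := by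
    rw [sum3_rev]
    refine Finset.sum_congr rfl fun k _ => Finset.sum_congr rfl fun m _ =>
      Finset.sum_congr rfl fun r _ => ?_
    rw [hDs r m, hHx m k]; ring
  have h0 : Gam2 (fun _ => D) a f x
      = 1 / 2 * (Lop (fun _ => D) a (Gam (fun _ => D) a f f) x
          - 2 * Gam (fun _ => D) a f (Lop (fun _ => D) a f) x) := rfl
  rw [h0, hGam, hLG, E1, E2, E3, I1, I2, I3, I4, I5]
  ring

lemma dot_eq {n : ℕ} (D : Matrix (Fin n) (Fin n) ℝ) (v : Fin n → ℝ) :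
    v ⬝ᵥ D.mulVec v = ∑ i, ∑ j, D i j * (v i * v j) := by
  simp only [dotProduct, Matrix.mulVec, Finset.mul_sum]
  exact Finset.sum_congr rfl fun i _ => Finset.sum_congr rfl fun j _ => by ring

lemma quad_eq {n : ℕ} (D : Matrix (Fin n) (Fin n) ℝ) (hDs : ∀ i j, D i j = D j i)
    (a : (Fin n → ℝ) → Fin n → ℝ) (x v : Fin n → ℝ) :
    v ⬝ᵥ ((1 / 2 : ℝ) • (Jac a x * D + (Jac a x * D)ᵀ)).mulVec v
      = ∑ k, ∑ l, ∑ i, D k l * v k * (pd l (fun y => a y i) x * v i) := by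
  have hN : ∀ k i, ((1 / 2 : ℝ) • (Jac a x * D + (Jac a x * D)ᵀ)) k i
      = 1 / 2 * ((∑ l, pd l (fun y => a y k) x * D l i)
          + ∑ l, pd l (fun y => a y i) x * D l k) := by
    intro k i
    simp [Jac, Matrix.mul_apply, Matrix.smul_apply, Matrix.add_apply,
      Matrix.transpose_apply, smul_eq_mul]
    exact Finset.sum_congr rfl fun l _ => mul_comm _ _
  calc v ⬝ᵥ ((1 / 2 : ℝ) • (Jac a x * D + (Jac a x * D)ᵀ)).mulVec v
      = ∑ k, ∑ i, v k * (((1 / 2 : ℝ) • (Jac a x * D + (Jac a x * D)ᵀ)) k i * v i) := by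
        simp only [dotProduct, Matrix.mulVec, Finset.mul_sum]
    _ = ∑ k, ∑ i, ∑ l, (1 / 2 * (v k * (pd l (fun y => a y k) x * D l i * v i))
          + 1 / 2 * (v k * (pd l (fun y => a y i) x * D l k * v i))) := by
        refine Finset.sum_congr rfl fun k _ => Finset.sum_congr rfl fun i _ => ?_
        rw [hN k i]
        simp only [Finset.sum_mul, Finset.mul_sum, add_mul, mul_add,
          ← Finset.sum_add_distrib]
        exact Finset.sum_congr rfl fun l _ => by ring
    _ = (∑ k, ∑ i, ∑ l, 1 / 2 * (v k * (pd l (fun y => a y k) x * D l i * v i)))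
          + ∑ k, ∑ i, ∑ l, 1 / 2 * (v k * (pd l (fun y => a y i) x * D l k * v i)) := by
        simp only [Finset.sum_add_distrib]
    _ = (∑ k, ∑ l, ∑ i, 1 / 2 * (D k l * v k * (pd l (fun y => a y i) x * v i)))
          + ∑ k, ∑ l, ∑ i, 1 / 2 * (D k l * v k * (pd l (fun y => a y i) x * v i)) := by
        congr 1
        · calc ∑ k, ∑ i, ∑ l, 1 / 2 * (v k * (pd l (fun y => a y k) x * D l i * v i))
              = ∑ i, ∑ k, ∑ l, 1 / 2 * (v k * (pd l (fun y => a y k) x * D l i * v i)) :=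
                Finset.sum_comm
            _ = ∑ i, ∑ l, ∑ k, 1 / 2 * (v k * (pd l (fun y => a y k) x * D l i * v i)) :=
                sum_swap23 _
            _ = _ := by
                refine Finset.sum_congr rfl fun k _ => Finset.sum_congr rfl fun l _ =>
                  Finset.sum_congr rfl fun i _ => ?_
                rw [hDs l k]; ring
        · calc ∑ k, ∑ i, ∑ l, 1 / 2 * (v k * (pd l (fun y => a y i) x * D l k * v i))
              = ∑ k, ∑ l, ∑ i, 1 / 2 * (v k * (pd l (fun y => a y i) x * D l k * v i)) :=
                sum_swap23 _
            _ = _ := by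
                refine Finset.sum_congr rfl fun k _ => Finset.sum_congr rfl fun l _ =>
                  Finset.sum_congr rfl fun i _ => ?_
                rw [hDs l k]; ring
    _ = ∑ k, ∑ l, ∑ i, D k l * v k * (pd l (fun y => a y i) x * v i) := by
        simp only [← Finset.sum_add_distrib]
        refine Finset.sum_congr rfl fun k _ => Finset.sum_congr rfl fun l _ =>
          Finset.sum_congr rfl fun i _ => by ring

lemma pd_linear {n : ℕ} (v : Fin n → ℝ) (j : Fin n) (x : Fin n → ℝ) :
    pd j (fun y => ∑ i, v i * y i) x = v j := by
  have d : ∀ (i : Fin n) (y : Fin n → ℝ), DifferentiableAt ℝ (fun z : Fin n → ℝ => z i) y :=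
    fun i y => (ContinuousLinearMap.proj (R := ℝ) (φ := fun _ : Fin n => ℝ) i).differentiableAt
  have heval : ∀ i : Fin n, pd j (fun y : Fin n → ℝ => y i) x = (Pi.single j 1 : Fin n → ℝ) i := by
    intro i
    show fderiv ℝ (fun y : Fin n → ℝ => y i) x (Pi.single j 1) = _
    rw [show (fun y : Fin n → ℝ => y i)
        = ⇑(ContinuousLinearMap.proj (R := ℝ) (φ := fun _ : Fin n => ℝ) i) from rfl,
      ContinuousLinearMap.fderiv]
    rfl
  calc pd j (fun y => ∑ i, v i * y i) x
      = ∑ i, pd j (fun y => v i * y i) x :=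
        pd_sum Finset.univ _ (fun i _ => (differentiableAt_const _).mul (d i x)) j
    _ = ∑ i, v i * (Pi.single j 1 : Fin n → ℝ) i := by
        refine Finset.sum_congr rfl fun i _ => ?_
        rw [pd_const_mul (d i x) (v i) j, heval i]
    _ = v j := by
        simp [Pi.single_apply, mul_ite, Finset.sum_ite_eq']

lemma lin_smooth {n : ℕ} (v : Fin n → ℝ) :
    ContDiff ℝ (⊤ : ℕ∞) (fun y : Fin n → ℝ => ∑ i, v i * y i) :=
  ContDiff.sum fun i _ => contDiff_const.mul
    (ContinuousLinearMap.proj (R := ℝ) (φ := fun _ : Fin n => ℝ) i).contDiff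

/-- Let `D` be a constant symmetric positive semidefinite `n×n` matrix,
`a : ℝⁿ → ℝⁿ` a smooth vector field, `ρ ∈ ℝ`, and `L` the associated operator.  Then the
curvature-dimension criterion `CD(ρ,∞)`, namely `Γ₂(f)(x) ≥ ρ Γ(f)(x)` for all smooth `f`
and all `x`, holds if and only if `½( Ja(x)·D + (Ja(x)·D)* ) ≥ ρ D` for all `x`, in the
sense of quadratic forms on `ℝⁿ`. -/
theorem cd_rho_infty_iff_jacobian_condition
    {n : ℕ} (D : Matrix (Fin n) (Fin n) ℝ) (hD : D.PosSemidef)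
    (a : (Fin n → ℝ) → Fin n → ℝ)
    (ha : ∀ i, ContDiff ℝ (⊤ : ℕ∞) fun x => a x i)
    (ρ : ℝ) :
    (∀ f : (Fin n → ℝ) → ℝ, ContDiff ℝ (⊤ : ℕ∞) f → ∀ x,
        ρ * Gam (fun _ => D) a f f x ≤ Gam2 (fun _ => D) a f x) ↔
      ∀ (x : Fin n → ℝ) (v : Fin n → ℝ),
        ρ * (v ⬝ᵥ D.mulVec v) ≤
          v ⬝ᵥ ((1 / 2 : ℝ) • (Jac a x * D + (Jac a x * D)ᵀ)).mulVec v := by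
  have hDs : ∀ i j, D i j = D j i := fun i j => by
    have h := hD.isHermitian.apply j i
    simpa using h
  constructor
  · intro h x v
    have hls : ContDiff ℝ (⊤ : ℕ∞) (fun y : Fin n → ℝ => ∑ i, v i * y i) := lin_smooth v
    have hpdfun : ∀ j : Fin n, pd j (fun y : Fin n → ℝ => ∑ i, v i * y i) = fun _ => v j :=
      fun j => funext fun y => pd_linear v j y
    have key := h _ hls x
    rw [gam_eq D hDs a hls hls x, gam2_eq D hDs a ha hls x] at key
    simp only [hpdfun, pd_const, mul_zero, zero_mul, Finset.sum_const_zero,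
      zero_add] at key
    rw [dot_eq D v, quad_eq D hDs a x v]
    exact key
  · intro h f hf x
    rw [gam_eq D hDs a hf hf x, gam2_eq D hDs a ha hf x]
    have hQ : 0 ≤ ∑ k, ∑ l, ∑ i, ∑ j,
        D k l * D i j * (pd k (pd i f) x * pd l (pd j f) x) :=
      Q_nonneg D hD (fun k i => pd k (pd i f) x)
    have hC : ρ * (∑ i, ∑ j, D i j * (pd i f x * pd j f x))
        ≤ ∑ k, ∑ l, ∑ i, D k l * pd k f x * (pd l (fun y => a y i) x * pd i f x) := by
      have := h x (fun k => pd k f x)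
      rwa [dot_eq, quad_eq D hDs a x] at this
    linarith
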